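/- Vanishing of the off-diagonal quadratic term: In the triangular array setup, for every pair of coordinates 1 ≤ j, l ≤ p, (Km)^{−1} Σ_{k=1}^K Σ_{1 ≤ i₁ ≠ i₂ ≤ m} η_{k i₁ j} η_{k i₂ l} converges to 0 in probability as K → ∞ and m → ∞, where η_{kij} denotes the j-th coordinate of η_{ki}. -/

import Mathlib

open MeasureTheory ProbabilityTheory Filter Topology Finset
open scoped RealInnerProductSpace ENNReal

lemma aux_prod4_le {a b c d A B C D : ℝ} (ha : |a| ≤ A) (hb : |b| ≤ B) (hc : |c| ≤ C)
    (hd : |d| ≤ D) : |a * b * (c * d)| ≤ A ^ 4 + B ^ 4 + C ^ 4 + D ^ 4 := by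
  have h0a := abs_nonneg a; have h0b := abs_nonneg b
  have h0c := abs_nonneg c; have h0d := abs_nonneg d
  have h1 : |a * b * (c * d)| = |a| * |b| * (|c| * |d|) := by
    rw [abs_mul, abs_mul, abs_mul]
  rw [h1]
  have hA := h0a.trans ha; have hB := h0b.trans hb
  have hC := h0c.trans hc; have hD := h0d.trans hd
  have h2 : |a| * |b| * (|c| * |d|) ≤ A * B * (C * D) := by
    apply mul_le_mul (mul_le_mul ha hb h0b (h0a.trans ha))
      (mul_le_mul hc hd h0d hC) (by positivity) (mul_nonneg hA hB)
  refine h2.trans ?_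
  nlinarith [sq_nonneg (A*B - C*D), sq_nonneg (A^2 - B^2), sq_nonneg (C^2 - D^2),
    sq_nonneg (A*B + C*D), mul_nonneg hA hB, mul_nonneg hC hD]

lemma aux_self_le_one_add_pow4 (t : ℝ) : t ≤ 1 + t ^ 4 := by
  nlinarith [sq_nonneg (t^2 - 1), sq_nonneg (t^2 - t), sq_nonneg (t - 1)]

lemma aux_singleton_cases {k k' i1 i2 i3 i4 : ℕ} (h12 : i1 ≠ i2) (h34 : i3 ≠ i4)
    (h : ¬(k = k' ∧ ((i1 = i3 ∧ i2 = i4) ∨ (i1 = i4 ∧ i2 = i3)))) :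
    ((k,i1) ≠ (k,i2) ∧ (k,i1) ≠ (k',i3) ∧ (k,i1) ≠ (k',i4)) ∨
    ((k,i2) ≠ (k,i1) ∧ (k,i2) ≠ (k',i3) ∧ (k,i2) ≠ (k',i4)) ∨
    ((k',i3) ≠ (k,i1) ∧ (k',i3) ≠ (k,i2) ∧ (k',i3) ≠ (k',i4)) ∨
    ((k',i4) ≠ (k,i1) ∧ (k',i4) ≠ (k,i2) ∧ (k',i4) ≠ (k',i3)) := by
  simp only [Ne, Prod.mk.injEq, not_and, not_or] at *
  omega

/-- Auxiliary index-pair function for the off-diagonal sum. -/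
def auxg {Ω : Type} {p : ℕ} (η : ℕ × ℕ → Ω → EuclideanSpace ℝ (Fin p)) (j l : Fin p)
    (t : ℕ × (ℕ × ℕ)) (ω : Ω) : ℝ :=
  η (t.1, t.2.1) ω j * η (t.1, t.2.2) ω l

/-- **Vanishing of the off-diagonal quadratic term**. In the triangular array
setup, for all coordinates `j, l`,
`(Km)⁻¹ ∑_{k<K} ∑_{i₁ ≠ i₂ < m} η_{k i₁ j} η_{k i₂ l}` converges to `0` in
probability as `K, m → ∞`. -/
theorem offdiagonal_quadratic_term_vanishes
    {p : ℕ} (hp : 1 ≤ p)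
    {Ω : Type} [MeasureSpace Ω] [IsProbabilityMeasure (ℙ : Measure Ω)]
    (η : ℕ × ℕ → Ω → EuclideanSpace ℝ (Fin p))
    (hmeas : ∀ ki, Measurable (η ki))
    (hindep : iIndepFun η ℙ)
    (hident : ∀ ki, IdentDistrib (η ki) (η (0, 0)) ℙ ℙ)
    (hmean : ∫ ω, η (0, 0) ω ∂ℙ = 0)
    (hmom4 : Integrable (fun ω => ‖η (0, 0) ω‖ ^ 4) ℙ)
    (covM : Matrix (Fin p) (Fin p) ℝ)
    (hcov : ∀ j l, covM j l = ∫ ω, η (0, 0) ω j * η (0, 0) ω l ∂ℙ)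
    (hns : covM.det ≠ 0)
    :
    ∀ j l : Fin p,
      TendstoInMeasure ℙ
        (fun (Km : ℕ × ℕ) (ω : Ω) =>
          ((Km.1 : ℝ) * (Km.2 : ℝ))⁻¹ * ∑ k ∈ Finset.range Km.1,
            ∑ i₁ ∈ Finset.range Km.2, ∑ i₂ ∈ (Finset.range Km.2).erase i₁,
              η (k, i₁) ω j * η (k, i₂) ω l)
        (atTop ×ˢ atTop) 0 := by
  classical
  intro j l
  -- coordinate measurability
  have hZmeas : ∀ (a : ℕ × ℕ) (c : Fin p), Measurable (fun ω => η a ω c) := by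
    intro a c
    exact (measurable_pi_apply c).comp ((WithLp.measurable_ofLp 2 _).comp (hmeas a))
  -- coordinate bounded by norm
  have hcoord : ∀ (a : ℕ × ℕ) (c : Fin p) (ω : Ω), |η a ω c| ≤ ‖η a ω‖ := by
    intro a c ω
    rw [EuclideanSpace.norm_eq, ← Real.sqrt_sq_eq_abs]
    apply Real.sqrt_le_sqrt
    calc (η a ω c) ^ 2 = ‖η a ω c‖ ^ 2 := by rw [Real.norm_eq_abs, sq_abs]
      _ ≤ ∑ i, ‖η a ω i‖ ^ 2 :=
        Finset.single_le_sum (f := fun i => ‖η a ω i‖ ^ 2) (fun i _ => by positivity)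
          (Finset.mem_univ c)
  -- identical distribution of coordinates and norms
  have hZid : ∀ (a : ℕ × ℕ) (c : Fin p),
      IdentDistrib (fun ω => η a ω c) (fun ω => η (0,0) ω c) ℙ ℙ := by
    intro a c
    exact (hident a).comp ((measurable_pi_apply c).comp (WithLp.measurable_ofLp 2 _))
  have hN4id : ∀ a : ℕ × ℕ,
      IdentDistrib (fun ω => ‖η a ω‖ ^ 4) (fun ω => ‖η (0,0) ω‖ ^ 4) ℙ ℙ := by
    intro a
    exact (hident a).comp (measurable_norm.pow_const 4)
  have hN4int : ∀ a : ℕ × ℕ, Integrable (fun ω => ‖η a ω‖ ^ 4) ℙ := fun a =>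
    (hN4id a).integrable_iff.2 hmom4
  set C : ℝ := ∫ ω, ‖η (0,0) ω‖ ^ 4 ∂ℙ with hCdef
  have hCnn : 0 ≤ C := integral_nonneg fun ω => by positivity
  have hN4eq : ∀ a : ℕ × ℕ, ∫ ω, ‖η a ω‖ ^ 4 ∂ℙ = C := fun a => (hN4id a).integral_eq
  -- integrability of η (0,0) and vanishing coordinate means
  have hη0int : Integrable (η (0,0)) ℙ := by
    refine Integrable.mono' ((integrable_const (1:ℝ)).add hmom4)
      (hmeas _).aestronglyMeasurable ?_
    filter_upwards with ω
    exact aux_self_le_one_add_pow4 _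
  have hZmean0 : ∀ c : Fin p, ∫ ω, η (0,0) ω c ∂ℙ = 0 := by
    intro c
    have h := (EuclideanSpace.proj (𝕜 := ℝ) c).integral_comp_comm hη0int
    rw [hmean] at h
    simpa using h
  have hZmean : ∀ (a : ℕ × ℕ) (c : Fin p), ∫ ω, η a ω c ∂ℙ = 0 := fun a c =>
    ((hZid a c).integral_eq).trans (hZmean0 c)
  -- integrability of four-fold coordinate products
  have hterm_int : ∀ (a b c d : ℕ × ℕ) (ca cb cc cd : Fin p),
      Integrable (fun ω => η a ω ca * η b ω cb * (η c ω cc * η d ω cd)) ℙ := by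
    intro a b c d ca cb cc cd
    refine Integrable.mono' (((hN4int a).add (hN4int b)).add ((hN4int c).add (hN4int d)))
      ((((hZmeas a ca).mul (hZmeas b cb)).mul
        ((hZmeas c cc).mul (hZmeas d cd))).aestronglyMeasurable) ?_
    filter_upwards with ω
    have h := aux_prod4_le (hcoord a ca ω) (hcoord b cb ω) (hcoord c cc ω) (hcoord d cd ω)
    rw [Real.norm_eq_abs]
    simp only [Pi.add_apply]
    refine h.trans (le_of_eq ?_)
    ring
  -- uniform bound for the nonvanishing terms
  have htermbound : ∀ (a b c d : ℕ × ℕ) (ca cb cc cd : Fin p),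
      ∫ ω, η a ω ca * η b ω cb * (η c ω cc * η d ω cd) ∂ℙ ≤ 4 * C := by
    intro a b c d ca cb cc cd
    have h1 : ∫ ω, η a ω ca * η b ω cb * (η c ω cc * η d ω cd) ∂ℙ
        ≤ ∫ ω, ‖η a ω‖ ^ 4 + ‖η b ω‖ ^ 4 + (‖η c ω‖ ^ 4 + ‖η d ω‖ ^ 4) ∂ℙ := by
      refine integral_mono (hterm_int a b c d ca cb cc cd)
        (((hN4int a).add (hN4int b)).add ((hN4int c).add (hN4int d))) ?_
      intro ω
      have h := aux_prod4_le (hcoord a ca ω) (hcoord b cb ω) (hcoord c cc ω) (hcoord d cd ω)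
      have h2 := (le_abs_self (η a ω ca * η b ω cb * (η c ω cc * η d ω cd))).trans h
      refine h2.trans (le_of_eq ?_)
      ring
    have e1 : ∫ ω, ‖η a ω‖ ^ 4 + ‖η b ω‖ ^ 4 + (‖η c ω‖ ^ 4 + ‖η d ω‖ ^ 4) ∂ℙ
        = (∫ ω, ‖η a ω‖ ^ 4 + ‖η b ω‖ ^ 4 ∂ℙ) + ∫ ω, ‖η c ω‖ ^ 4 + ‖η d ω‖ ^ 4 ∂ℙ :=
      integral_add ((hN4int a).add (hN4int b)) ((hN4int c).add (hN4int d))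
    have e2 : ∫ ω, ‖η a ω‖ ^ 4 + ‖η b ω‖ ^ 4 ∂ℙ = C + C := by
      rw [integral_add (hN4int a) (hN4int b), hN4eq, hN4eq]
    have e3 : ∫ ω, ‖η c ω‖ ^ 4 + ‖η d ω‖ ^ 4 ∂ℙ = C + C := by
      rw [integral_add (hN4int c) (hN4int d), hN4eq, hN4eq]
    rw [e1, e2, e3] at h1
    linarith
  -- vanishing of the terms with a "singleton" index
  have hkey0 : ∀ (a b c d : ℕ × ℕ) (ca cb cc cd : Fin p), a ≠ b → a ≠ c → a ≠ d →
      ∫ ω, η a ω ca * (η b ω cb * (η c ω cc * η d ω cd)) ∂ℙ = 0 := by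
    intro a b c d ca cb cc cd hab hac had
    have hdisj : Disjoint ({a} : Finset (ℕ × ℕ)) {b, c, d} := by
      simp [Finset.disjoint_left, hab, hac, had]
    have hfin := hindep.indepFun_finset {a} {b, c, d} hdisj hmeas
    have hmema : a ∈ ({a} : Finset (ℕ × ℕ)) := Finset.mem_singleton_self a
    have hmb : b ∈ ({b, c, d} : Finset (ℕ × ℕ)) := by simp
    have hmc : c ∈ ({b, c, d} : Finset (ℕ × ℕ)) := by simp
    have hmd : d ∈ ({b, c, d} : Finset (ℕ × ℕ)) := by simp
    have hcomp : ∀ (s : Finset (ℕ × ℕ)) (x : s) (c' : Fin p),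
        Measurable (fun v : s → EuclideanSpace ℝ (Fin p) => v x c') := fun s x c' =>
      (measurable_pi_apply c').comp ((WithLp.measurable_ofLp 2 _).comp (measurable_pi_apply x))
    have hI : IndepFun (fun ω => η a ω ca)
        (fun ω => η b ω cb * (η c ω cc * η d ω cd)) ℙ := by
      exact hfin.comp
        (φ := fun v : ({a} : Finset (ℕ × ℕ)) → EuclideanSpace ℝ (Fin p) => v ⟨a, hmema⟩ ca)
        (ψ := fun v : ({b, c, d} : Finset (ℕ × ℕ)) → EuclideanSpace ℝ (Fin p) =>
          v ⟨b, hmb⟩ cb * (v ⟨c, hmc⟩ cc * v ⟨d, hmd⟩ cd))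
        ((measurable_pi_apply ca).comp ((WithLp.measurable_ofLp 2 _).comp (measurable_pi_apply _)))
        ((hcomp _ ⟨b, hmb⟩ cb).mul ((hcomp _ ⟨c, hmc⟩ cc).mul (hcomp _ ⟨d, hmd⟩ cd)))
    have hmul := hI.integral_fun_mul_eq_mul_integral (hZmeas a ca).aestronglyMeasurable
      (((hZmeas b cb).mul ((hZmeas c cc).mul (hZmeas d cd))).aestronglyMeasurable)
    calc ∫ ω, η a ω ca * (η b ω cb * (η c ω cc * η d ω cd)) ∂ℙ
        = (∫ ω, η a ω ca ∂ℙ) * ∫ ω, η b ω cb * (η c ω cc * η d ω cd) ∂ℙ := hmul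
      _ = 0 := by rw [hZmean a ca, zero_mul]
  -- now the convergence in measure
  rw [tendstoInMeasure_iff_dist]
  intro ε hε
  have hbdd_tendsto : Tendsto (fun Km : ℕ × ℕ => ENNReal.ofReal (8 * C / ε ^ 2 / Km.1))
      (atTop ×ˢ atTop) (𝓝 0) := by
    have h1 : Tendsto (fun K : ℕ => 8 * C / ε ^ 2 / (K : ℝ)) atTop (𝓝 0) :=
      tendsto_const_div_atTop_nhds_zero_nat _
    have h3 : Tendsto (fun Km : ℕ × ℕ => 8 * C / ε ^ 2 / (Km.1 : ℝ)) (atTop ×ˢ atTop) (𝓝 0) :=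
      h1.comp tendsto_fst
    have h4 := ENNReal.tendsto_ofReal h3
    simpa using h4
  refine tendsto_of_tendsto_of_tendsto_of_le_of_le' tendsto_const_nhds hbdd_tendsto
    (Filter.Eventually.of_forall fun Km => zero_le) ?_
  filter_upwards [(eventually_ge_atTop 1).prod_inl atTop, (eventually_ge_atTop 1).prod_inr atTop]
    with Km hK1 hm1
  obtain ⟨K, m⟩ := Km
  simp only at hK1 hm1
  dsimp only
  simp only [Pi.zero_apply, dist_zero_right, Real.norm_eq_abs]
  set S : Ω → ℝ := fun ω => ∑ k ∈ Finset.range K, ∑ i₁ ∈ Finset.range m,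
    ∑ i₂ ∈ (Finset.range m).erase i₁, η (k, i₁) ω j * η (k, i₂) ω l with hSdef
  set T : Finset (ℕ × (ℕ × ℕ)) :=
    Finset.range K ×ˢ ((Finset.range m ×ˢ Finset.range m).filter fun q => q.2 ≠ q.1) with hTdef
  have hS_eq : ∀ ω, S ω = ∑ t ∈ T, auxg η j l t ω := by
    intro ω
    rw [hSdef, hTdef, Finset.sum_product]
    refine Finset.sum_congr rfl fun k _ => ?_
    rw [Finset.sum_filter, Finset.sum_product]
    refine Finset.sum_congr rfl fun i1 _ => ?_
    rw [← Finset.filter_ne', Finset.sum_filter]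
    rfl
  have hSmeas : Measurable S := by
    refine Finset.measurable_sum _ fun k _ => ?_
    refine Finset.measurable_sum _ fun i1 _ => ?_
    refine Finset.measurable_sum _ fun i2 _ => ?_
    exact (hZmeas _ j).mul (hZmeas _ l)
  have hgint : ∀ t u : ℕ × (ℕ × ℕ), Integrable (fun ω => auxg η j l t ω * auxg η j l u ω) ℙ := by
    intro t u
    exact hterm_int (t.1, t.2.1) (t.1, t.2.2) (u.1, u.2.1) (u.1, u.2.2) j l j l
  have hrw : (fun ω => S ω ^ 2) = fun ω => ∑ t ∈ T, ∑ u ∈ T, auxg η j l t ω * auxg η j l u ω := by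
    funext ω
    rw [hS_eq ω, sq, Finset.sum_mul_sum]
  have hS2int : Integrable (fun ω => S ω ^ 2) ℙ := by
    rw [hrw]
    exact integrable_finset_sum _ fun t _ => integrable_finset_sum _ fun u _ => hgint t u
  have hT2 : ∀ v ∈ T, v.2.1 ≠ v.2.2 := by
    intro v hv
    rw [hTdef] at hv
    simp only [Finset.mem_product, Finset.mem_filter] at hv
    exact Ne.symm hv.2.2
  have hrowbound : ∀ t ∈ T, ∑ u ∈ T, ∫ ω, auxg η j l t ω * auxg η j l u ω ∂ℙ ≤ 8 * C := by
    intro t ht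
    have hstep : ∀ u ∈ T, ∫ ω, auxg η j l t ω * auxg η j l u ω ∂ℙ
        ≤ if t.1 = u.1 ∧ (t.2 = u.2 ∨ t.2 = (u.2.2, u.2.1)) then 4 * C else 0 := by
      intro u hu
      by_cases hmatch : t.1 = u.1 ∧ (t.2 = u.2 ∨ t.2 = (u.2.2, u.2.1))
      · rw [if_pos hmatch]
        exact htermbound (t.1, t.2.1) (t.1, t.2.2) (u.1, u.2.1) (u.1, u.2.2) j l j l
      · rw [if_neg hmatch]
        refine le_of_eq ?_
        have h12 := hT2 t ht
        have h34 := hT2 u hu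
        have hnm : ¬(t.1 = u.1 ∧
            ((t.2.1 = u.2.1 ∧ t.2.2 = u.2.2) ∨ (t.2.1 = u.2.2 ∧ t.2.2 = u.2.1))) := by
          simpa [Prod.ext_iff] using hmatch
        rcases aux_singleton_cases h12 h34 hnm with ⟨h1, h2, h3⟩ | ⟨h1, h2, h3⟩ |
          ⟨h1, h2, h3⟩ | ⟨h1, h2, h3⟩
        · calc ∫ ω, auxg η j l t ω * auxg η j l u ω ∂ℙ
              = ∫ ω, η (t.1, t.2.1) ω j *
                  (η (t.1, t.2.2) ω l * (η (u.1, u.2.1) ω j * η (u.1, u.2.2) ω l)) ∂ℙ :=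
                integral_congr_ae (Filter.Eventually.of_forall fun ω => by
                  simp only [auxg]; ring)
            _ = 0 := hkey0 _ _ _ _ j l j l h1 h2 h3
        · calc ∫ ω, auxg η j l t ω * auxg η j l u ω ∂ℙ
              = ∫ ω, η (t.1, t.2.2) ω l *
                  (η (t.1, t.2.1) ω j * (η (u.1, u.2.1) ω j * η (u.1, u.2.2) ω l)) ∂ℙ :=
                integral_congr_ae (Filter.Eventually.of_forall fun ω => by
                  simp only [auxg]; ring)
            _ = 0 := hkey0 _ _ _ _ l j j l h1 h2 h3
        · calc ∫ ω, auxg η j l t ω * auxg η j l u ω ∂ℙ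
              = ∫ ω, η (u.1, u.2.1) ω j *
                  (η (t.1, t.2.1) ω j * (η (t.1, t.2.2) ω l * η (u.1, u.2.2) ω l)) ∂ℙ :=
                integral_congr_ae (Filter.Eventually.of_forall fun ω => by
                  simp only [auxg]; ring)
            _ = 0 := hkey0 _ _ _ _ j j l l h1 h2 h3
        · calc ∫ ω, auxg η j l t ω * auxg η j l u ω ∂ℙ
              = ∫ ω, η (u.1, u.2.2) ω l *
                  (η (t.1, t.2.1) ω j * (η (t.1, t.2.2) ω l * η (u.1, u.2.1) ω j)) ∂ℙ :=
                integral_congr_ae (Filter.Eventually.of_forall fun ω => by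
                  simp only [auxg]; ring)
            _ = 0 := hkey0 _ _ _ _ l j l j h1 h2 h3
    calc ∑ u ∈ T, ∫ ω, auxg η j l t ω * auxg η j l u ω ∂ℙ
        ≤ ∑ u ∈ T, if t.1 = u.1 ∧ (t.2 = u.2 ∨ t.2 = (u.2.2, u.2.1)) then 4 * C else 0 :=
          Finset.sum_le_sum hstep
      _ = ∑ u ∈ T.filter (fun u => t.1 = u.1 ∧ (t.2 = u.2 ∨ t.2 = (u.2.2, u.2.1))), (4 * C) :=
          (Finset.sum_filter _ _).symm
      _ ≤ 2 * (4 * C) := by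
          have hsub : T.filter (fun u => t.1 = u.1 ∧ (t.2 = u.2 ∨ t.2 = (u.2.2, u.2.1)))
              ⊆ {t, (t.1, (t.2.2, t.2.1))} := by
            intro u hu
            simp only [Finset.mem_filter, Finset.mem_insert, Finset.mem_singleton] at hu ⊢
            obtain ⟨-, h1, h2⟩ := hu
            rcases h2 with h2 | h2
            · left; exact (Prod.ext h1 h2).symm
            · right; exact Prod.ext h1.symm (by simp [h2])
          rw [Finset.sum_const, nsmul_eq_mul]
          have hcard : (T.filter (fun u => t.1 = u.1 ∧
              (t.2 = u.2 ∨ t.2 = (u.2.2, u.2.1)))).card ≤ 2 :=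
            le_trans (Finset.card_le_card hsub)
              (le_trans (Finset.card_insert_le _ _) (by simp))
          refine mul_le_mul_of_nonneg_right ?_ (by positivity)
          exact_mod_cast hcard
      _ = 8 * C := by ring
  have hTcard : (T.card : ℝ) ≤ (K : ℝ) * (m : ℝ) ^ 2 := by
    have h1 : T.card ≤ K * (m * m) := by
      rw [hTdef, Finset.card_product]
      refine Nat.mul_le_mul (by simp) ?_
      refine le_trans (Finset.card_filter_le _ _) ?_
      simp [Finset.card_product]
    calc (T.card : ℝ) ≤ ((K * (m * m) : ℕ) : ℝ) := by exact_mod_cast h1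
      _ = (K : ℝ) * (m : ℝ) ^ 2 := by push_cast; ring
  have hSsq : ∫ ω, S ω ^ 2 ∂ℙ ≤ 8 * C * ((K : ℝ) * (m : ℝ) ^ 2) := by
    have hsplit : ∫ ω, S ω ^ 2 ∂ℙ
        = ∑ t ∈ T, ∑ u ∈ T, ∫ ω, auxg η j l t ω * auxg η j l u ω ∂ℙ := by
      rw [hrw, integral_finset_sum _ fun t _ => integrable_finset_sum _ fun u _ => hgint t u]
      exact Finset.sum_congr rfl fun t _ => integral_finset_sum _ fun u _ => hgint t u
    rw [hsplit]
    calc ∑ t ∈ T, ∑ u ∈ T, ∫ ω, auxg η j l t ω * auxg η j l u ω ∂ℙ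
        ≤ ∑ _t ∈ T, (8 * C) := Finset.sum_le_sum hrowbound
      _ = T.card * (8 * C) := by rw [Finset.sum_const, nsmul_eq_mul]
      _ ≤ ((K : ℝ) * (m : ℝ) ^ 2) * (8 * C) := by
          exact mul_le_mul_of_nonneg_right hTcard (by positivity)
      _ = 8 * C * ((K : ℝ) * (m : ℝ) ^ 2) := by ring
  -- Chebyshev/Markov step
  have hKpos : (0 : ℝ) < K := by exact_mod_cast Nat.lt_of_lt_of_le Nat.zero_lt_one hK1
  have hmpos : (0 : ℝ) < m := by exact_mod_cast Nat.lt_of_lt_of_le Nat.zero_lt_one hm1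
  set cc : ℝ := ((K : ℝ) * (m : ℝ))⁻¹ with hccdef
  have hfmeas : Measurable fun ω => ENNReal.ofReal ((cc * S ω) ^ 2) :=
    ENNReal.measurable_ofReal.comp ((hSmeas.const_mul cc).pow_const 2)
  have hfint : Integrable (fun ω => (cc * S ω) ^ 2) ℙ := by
    have h := hS2int.const_mul (cc ^ 2)
    refine h.congr (Filter.Eventually.of_forall fun ω => ?_)
    ring
  have hsubset : {ω : Ω | ε ≤ |cc * S ω|}
      ⊆ {ω : Ω | ENNReal.ofReal (ε ^ 2) ≤ ENNReal.ofReal ((cc * S ω) ^ 2)} := by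
    intro ω hω
    simp only [Set.mem_setOf_eq] at hω ⊢
    apply ENNReal.ofReal_le_ofReal
    calc ε ^ 2 ≤ |cc * S ω| ^ 2 := by
          exact pow_le_pow_left₀ hε.le hω 2
      _ = (cc * S ω) ^ 2 := sq_abs _
  have hmarkov := meas_ge_le_lintegral_div (μ := ℙ)
    (f := fun ω => ENNReal.ofReal ((cc * S ω) ^ 2)) hfmeas.aemeasurable
    (ε := ENNReal.ofReal (ε ^ 2)) (ENNReal.ofReal_pos.2 (by positivity)).ne'
    ENNReal.ofReal_ne_top
  have hlin : ∫⁻ ω, ENNReal.ofReal ((cc * S ω) ^ 2) ∂ℙ = ENNReal.ofReal (∫ ω, (cc * S ω) ^ 2 ∂ℙ) :=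
    (ofReal_integral_eq_lintegral_ofReal hfint
      (Filter.Eventually.of_forall fun ω => sq_nonneg _)).symm
  have hintle : ∫ ω, (cc * S ω) ^ 2 ∂ℙ ≤ 8 * C / K := by
    have h1 : ∫ ω, (cc * S ω) ^ 2 ∂ℙ = cc ^ 2 * ∫ ω, S ω ^ 2 ∂ℙ := by
      rw [← integral_const_mul]
      exact integral_congr_ae (Filter.Eventually.of_forall fun ω => by ring)
    rw [h1]
    have h2 : cc ^ 2 * ∫ ω, S ω ^ 2 ∂ℙ ≤ cc ^ 2 * (8 * C * ((K : ℝ) * (m : ℝ) ^ 2)) :=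
      mul_le_mul_of_nonneg_left hSsq (by positivity)
    refine h2.trans (le_of_eq ?_)
    rw [hccdef]
    field_simp
  calc ℙ {x | ε ≤ |cc * S x|}
      ≤ ℙ {ω | ENNReal.ofReal (ε ^ 2) ≤ ENNReal.ofReal ((cc * S ω) ^ 2)} :=
        measure_mono hsubset
    _ ≤ (∫⁻ ω, ENNReal.ofReal ((cc * S ω) ^ 2) ∂ℙ) / ENNReal.ofReal (ε ^ 2) := hmarkov
    _ = ENNReal.ofReal (∫ ω, (cc * S ω) ^ 2 ∂ℙ) / ENNReal.ofReal (ε ^ 2) := by rw [hlin]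
    _ ≤ ENNReal.ofReal (8 * C / K) / ENNReal.ofReal (ε ^ 2) := by
        gcongr
    _ = ENNReal.ofReal (8 * C / ε ^ 2 / K) := by
        rw [← ENNReal.ofReal_div_of_pos (by positivity)]
        congr 1
        ring
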